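/- Let X be a 2×2 complex matrix with trace zero. Then ‖α·X + β·Xᴴ‖ ≤ √(|α|² + |β|²) holds for all complex numbers α, β if and only if the Frobenius norm of X is at most 1, i.e., √(trace(Xᴴ·X)) ≤ 1. (Equivalently: X belongs to the second matricial range W₂(J₃) of the 3×3 Jordan block J₃ if and only if ‖X‖_F ≤ 1.) -/

import Mathlib

open Matrix
open scoped ComplexOrder

/-- The operator norm (spectral norm) of a square complex matrix. -/
noncomputable def opNorm {k : ℕ} (A : Matrix (Fin k) (Fin k) ℂ) : ℝ :=
  ‖Matrix.toEuclideanCLM (𝕜 := ℂ) A‖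

open Complex

private lemma aux_bridge (M : Matrix (Fin 2) (Fin 2) ℂ) {c : ℝ} (hc : 0 ≤ c) :
    opNorm M ≤ c ↔ ∀ x₀ x₁ : ℂ,
      Complex.normSq (M 0 0 * x₀ + M 0 1 * x₁) + Complex.normSq (M 1 0 * x₀ + M 1 1 * x₁)
        ≤ c^2 * (Complex.normSq x₀ + Complex.normSq x₁) := by
  rw [opNorm, ContinuousLinearMap.opNorm_le_iff hc]
  have happ : ∀ (x : EuclideanSpace ℂ (Fin 2)) (i : Fin 2),
      (toEuclideanCLM (𝕜 := ℂ) M x) i = M i 0 * x 0 + M i 1 * x 1 := by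
    intro x i
    have : (toEuclideanCLM (𝕜 := ℂ) M x) i
        = (WithLp.equiv 2 (Fin 2 → ℂ) (toEuclideanCLM (𝕜 := ℂ) M x)) i := rfl
    rw [this]
    change (M *ᵥ x.ofLp) i = _
    rw [mulVec, dotProduct, Fin.sum_univ_two]
  have key : ∀ (x : EuclideanSpace ℂ (Fin 2)),
      (‖toEuclideanCLM (𝕜 := ℂ) M x‖ ≤ c * ‖x‖ ↔
        Complex.normSq (M 0 0 * x 0 + M 0 1 * x 1) + Complex.normSq (M 1 0 * x 0 + M 1 1 * x 1)
          ≤ c^2 * (Complex.normSq (x 0) + Complex.normSq (x 1))) := by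
    intro x
    rw [EuclideanSpace.norm_eq, EuclideanSpace.norm_eq, Fin.sum_univ_two, Fin.sum_univ_two,
      happ, happ,
      show c * Real.sqrt (‖x 0‖^2 + ‖x 1‖^2) = Real.sqrt (c^2 * (‖x 0‖^2 + ‖x 1‖^2)) by
        rw [Real.sqrt_mul (sq_nonneg c), Real.sqrt_sq hc],
      Real.sqrt_le_sqrt_iff (by positivity)]
    simp [Complex.sq_norm]
  constructor
  · intro h x₀ x₁
    have := (key ((WithLp.equiv 2 (Fin 2 → ℂ)).symm ![x₀, x₁])).mp
      (h ((WithLp.equiv 2 (Fin 2 → ℂ)).symm ![x₀, x₁]))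
    simpa using this
  · intro h x
    exact (key x).mpr (h (x 0) (x 1))

private lemma aux_I1 (a b c α β : ℂ) :
    2 * normSq (α*a + β*(starRingEnd ℂ) a) + normSq (α*b + β*(starRingEnd ℂ) c)
      + normSq (α*c + β*(starRingEnd ℂ) b)
    = (normSq α + normSq β) * (2*normSq a + normSq b + normSq c)
      + 4 * (α * (starRingEnd ℂ) β * (a*a + b*c)).re := by
  simp only [normSq_apply, Complex.add_re, Complex.add_im, Complex.mul_re, Complex.mul_im,
    Complex.conj_re, Complex.conj_im]
  ring

private lemma aux_I2 (α β δ : ℂ) (F : ℝ) :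
    normSq (α*α*δ + β*β*(starRingEnd ℂ) δ + α*β*(F:ℂ))
    = (normSq α^2 + normSq β^2) * normSq δ + normSq α * normSq β * F^2
      + 2*((α*(starRingEnd ℂ) β*δ).re^2 - (α*(starRingEnd ℂ) β*δ).im^2)
      + 2*F*(normSq α + normSq β)*(α*(starRingEnd ℂ) β*δ).re := by
  simp only [normSq_apply, Complex.add_re, Complex.add_im, Complex.mul_re, Complex.mul_im,
    Complex.conj_re, Complex.conj_im, Complex.ofReal_re, Complex.ofReal_im]
  ring

private lemma aux_I3 (P Q R : ℂ) (cc : ℝ) :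
    (cc - normSq P - normSq R) * (cc - normSq P - normSq Q)
      - normSq ((starRingEnd ℂ) P * Q - (starRingEnd ℂ) R * P)
    = cc^2 - cc*(2*normSq P + normSq Q + normSq R) + normSq (P*P + Q*R) := by
  simp only [normSq_apply, Complex.add_re, Complex.add_im, Complex.mul_re, Complex.mul_im,
    Complex.sub_re, Complex.sub_im, Complex.conj_re, Complex.conj_im]
  ring

private lemma aux_I4 (P Q R x₀ x₁ : ℂ) (cc : ℝ) :
    cc*(normSq x₀ + normSq x₁) - (normSq (P*x₀ + Q*x₁) + normSq (R*x₀ - P*x₁))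
    = (cc - normSq P - normSq R)*normSq x₀ + (cc - normSq P - normSq Q)*normSq x₁
      - 2*((starRingEnd ℂ) x₀ * ((starRingEnd ℂ) P * Q - (starRingEnd ℂ) R * P) * x₁).re := by
  simp only [normSq_apply, Complex.add_re, Complex.add_im, Complex.mul_re, Complex.mul_im,
    Complex.sub_re, Complex.sub_im, Complex.conj_re, Complex.conj_im]
  ring

private lemma aux_I5 (a b c α β : ℂ) :
    (α*a + β*(starRingEnd ℂ) a)*(α*a + β*(starRingEnd ℂ) a)
      + (α*b + β*(starRingEnd ℂ) c)*(α*c + β*(starRingEnd ℂ) b)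
    = α*α*(a*a+b*c) + β*β*(starRingEnd ℂ) (a*a+b*c)
      + α*β*((2*normSq a + normSq b + normSq c : ℝ) : ℂ) := by
  apply Complex.ext <;>
  · simp only [normSq_apply, Complex.add_re, Complex.add_im, Complex.mul_re, Complex.mul_im,
      Complex.conj_re, Complex.conj_im, Complex.ofReal_re, Complex.ofReal_im,
      Complex.ofReal_add, Complex.ofReal_mul]
    ring

private lemma aux_rm (α β δ : ℂ) :
    (α*(starRingEnd ℂ) β*δ).re^2 + (α*(starRingEnd ℂ) β*δ).im^2
      = normSq α * normSq β * normSq δ := by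
  have h : (α*(starRingEnd ℂ) β*δ).re^2 + (α*(starRingEnd ℂ) β*δ).im^2
      = normSq (α*(starRingEnd ℂ) β*δ) := by
    simp [normSq_apply]; ring
  rw [h, normSq_mul, normSq_mul, normSq_conj]

private lemma aux_psd_pointwise (A B : ℝ) (N x₀ x₁ : ℂ) (hAB : 0 ≤ A + B)
    (hdet : normSq N ≤ A*B) :
    0 ≤ A*normSq x₀ + B*normSq x₁ - 2*((starRingEnd ℂ) x₀ * N * x₁).re := by
  have hN : 0 ≤ normSq N := normSq_nonneg N
  have hA : 0 ≤ A := by nlinarith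
  have hB : 0 ≤ B := by nlinarith
  have h1 : ((starRingEnd ℂ) x₀ * N * x₁).re ≤ ‖x₀‖ * ‖N‖ * ‖x₁‖ := by
    calc ((starRingEnd ℂ) x₀ * N * x₁).re ≤ ‖(starRingEnd ℂ) x₀ * N * x₁‖ := Complex.re_le_norm _
    _ = ‖x₀‖ * ‖N‖ * ‖x₁‖ := by rw [norm_mul, norm_mul, RCLike.norm_conj]
  have hs2 : (Real.sqrt (A*B))^2 = A*B := Real.sq_sqrt (by positivity)
  have hs0 : 0 ≤ Real.sqrt (A*B) := Real.sqrt_nonneg _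
  have hNle : ‖N‖ ≤ Real.sqrt (A*B) := by
    rw [show ‖N‖ = Real.sqrt (normSq N) by
      rw [← Complex.sq_norm, Real.sqrt_sq (norm_nonneg _)]]
    exact Real.sqrt_le_sqrt hdet
  have hkey : 2 * (Real.sqrt (A*B) * (‖x₀‖ * ‖x₁‖)) ≤ A*‖x₀‖^2 + B*‖x₁‖^2 := by
    rcases eq_or_lt_of_le hA with hA0 | hApos
    · have hz : Real.sqrt (A*B) = 0 := by rw [← hA0, zero_mul, Real.sqrt_zero]
      rw [hz]
      nlinarith [mul_nonneg hB (sq_nonneg ‖x₁‖), mul_nonneg hA (sq_nonneg ‖x₀‖)]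
    · nlinarith [sq_nonneg (A*‖x₀‖ - Real.sqrt (A*B)*‖x₁‖), hApos, hs2]
  have h2 : ((starRingEnd ℂ) x₀ * N * x₁).re ≤ Real.sqrt (A*B) * (‖x₀‖ * ‖x₁‖) := by
    have := mul_nonneg (norm_nonneg x₀) (norm_nonneg x₁)
    nlinarith [mul_nonneg (sub_nonneg.2 hNle) (mul_nonneg (norm_nonneg x₀) (norm_nonneg x₁))]
  have hn0 : normSq x₀ = ‖x₀‖^2 := by rw [← Complex.sq_norm]
  have hn1 : normSq x₁ = ‖x₁‖^2 := by rw [← Complex.sq_norm]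
  rw [hn0, hn1]; linarith

private lemma aux_psd_of_pointwise (A B : ℝ) (N : ℂ)
    (hp : ∀ x₀ x₁ : ℂ, 0 ≤ A*normSq x₀ + B*normSq x₁ - 2*((starRingEnd ℂ) x₀ * N * x₁).re) :
    0 ≤ A ∧ 0 ≤ B ∧ normSq N ≤ A*B := by
  have hA : 0 ≤ A := by have := hp 1 0; simpa using this
  have hB : 0 ≤ B := by have := hp 0 1; simpa using this
  refine ⟨hA, hB, ?_⟩
  have hq : ∀ n : ℝ, 0 ≤ A*(n^2*normSq N) + B - 2*(n*normSq N) := by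
    intro n
    have h := hp ((n:ℂ)*N) 1
    have e1 : normSq ((n:ℂ)*N) = n^2*normSq N := by
      rw [normSq_mul, normSq_ofReal]; ring
    have e2 : ((starRingEnd ℂ) ((n:ℂ)*N) * N * 1).re = n * normSq N := by
      simp only [mul_one, _root_.map_mul, Complex.conj_ofReal, Complex.mul_re, Complex.mul_im,
        Complex.conj_re, Complex.conj_im, Complex.ofReal_re, Complex.ofReal_im, normSq_apply]
      ring
    rw [e1, e2, normSq_one] at h
    linarith
  rcases eq_or_lt_of_le (normSq_nonneg N) with h0 | hpos
  · rw [← h0]; positivity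
  · rcases eq_or_lt_of_le hA with hA0 | hApos
    · exfalso
      have h := hq ((B+1)/(2*normSq N))
      rw [← hA0] at h
      have h2 : (B+1)/(2*normSq N)*normSq N = (B+1)/2 := by field_simp
      nlinarith
    · have h := hq (1/A)
      have h2 : A*((1/A)^2*normSq N) = normSq N/A := by field_simp
      have h3 : (1/A)*normSq N = normSq N/A := by ring
      rw [h2, h3] at h
      have h4 : normSq N/A ≤ B := by linarith
      calc normSq N = (normSq N/A)*A := by field_simp
      _ ≤ B*A := mul_le_mul_of_nonneg_right h4 hA
      _ = A*B := by ring

private lemma aux_R1 (s t dd F r m : ℝ) (hs : 0 ≤ s) (ht : 0 ≤ t) (hdd : 0 ≤ dd)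
    (hF0 : 0 ≤ F) (hF1 : F ≤ 1) (h4 : 4*dd ≤ F^2) (hrm : r^2 + m^2 = s*t*dd) :
    (s+t)*F + 4*r ≤ 2*(s+t) ∧
    0 ≤ (s+t)^2 - (s+t)*((s+t)*F + 4*r)
      + ((s^2+t^2)*dd + s*t*F^2 + 2*(r^2-m^2) + 2*F*(s+t)*r) := by
  have hh2 : (Real.sqrt (s*t))^2 = s*t := Real.sq_sqrt (mul_nonneg hs ht)
  have hh0 : 0 ≤ Real.sqrt (s*t) := Real.sqrt_nonneg _
  have he2 : (Real.sqrt dd)^2 = dd := Real.sq_sqrt hdd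
  have he0 : 0 ≤ Real.sqrt dd := Real.sqrt_nonneg _
  set h := Real.sqrt (s*t)
  set e := Real.sqrt dd
  have h2h : 2*h ≤ s + t := by nlinarith [sq_nonneg (s-t)]
  have h2e : 2*e ≤ F := by nlinarith
  have hrg : r ≤ h*e := by nlinarith [mul_nonneg hh0 he0, sq_nonneg m]
  constructor
  · nlinarith [mul_nonneg hh0 he0, mul_nonneg (mul_nonneg hh0 he0) hF0,
      mul_nonneg he0 (sub_nonneg.2 h2h), mul_nonneg (add_nonneg hs ht) (sub_nonneg.2 h2e),
      mul_nonneg (add_nonneg hs ht) (sub_nonneg.2 hF1)]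
  · have hQg : 0 ≤ h^2*F^2 - 2*(s+t)*(2-F)*(h*e) + (s+t)^2*(1-F) + (s+t)^2*e^2 := by
      rcases eq_or_lt_of_le hF0 with hF00 | hFpos
      · have he00 : e = 0 := by nlinarith
        rw [← hF00, he00]
        nlinarith [sq_nonneg (s+t)]
      · nlinarith [sq_nonneg (h*F^2 - (s+t)*(2-F)*e),
          mul_nonneg (mul_nonneg (sq_nonneg (s+t)) (sub_nonneg.2 hF1))
            (by nlinarith : (0:ℝ) ≤ F^2 - 4*e^2),
          mul_pos hFpos hFpos]
    have h2 : 4*r + 4*(h*e) ≤ 2*(s+t)*(2-F) := by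
      have k1 : 0 ≤ (s + t - 2*h)*e := mul_nonneg (by linarith) he0
      have k2 : 0 ≤ (s+t)*(F - 2*e) := mul_nonneg (add_nonneg hs ht) (by linarith)
      have k3 : 0 ≤ (s+t)*(2 - 2*F) := mul_nonneg (add_nonneg hs ht) (by linarith)
      nlinarith
    have hprod : 0 ≤ (h*e - r)*(2*(s+t)*(2-F) - 4*(r + h*e)) :=
      mul_nonneg (by linarith) (by linarith)
    have hG : (s+t)^2 - (s+t)*((s+t)*F + 4*r)
        + ((s^2+t^2)*dd + s*t*F^2 + 2*(r^2-m^2) + 2*F*(s+t)*r)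
        = (h^2*F^2 - 2*(s+t)*(2-F)*(h*e) + (s+t)^2*(1-F) + (s+t)^2*e^2)
          + (h*e - r)*(2*(s+t)*(2-F) - 4*(r + h*e)) := by
      linear_combination (-2 : ℝ) * hrm + (-(s-t)^2) * he2 + (-(F^2-4*e^2)) * hh2
    linarith [hQg, hprod]

private lemma aux_endgame (F d k : ℝ) (hF : 0 < F) (hk : k*F = d)
    (htr : F + 4*(k*d) ≤ 2) (hdet : 0 ≤ 1 - (F + 4*(k*d)) + (d + k*F)^2) : F ≤ 1 := by
  by_contra hc
  push_neg at hc
  have hkd : k*d*F = d^2 := by rw [← hk]; ring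
  have h1 : F^2 + 4*d^2 ≤ 2*F := by nlinarith [mul_le_mul_of_nonneg_right htr hF.le]
  have h2 : 0 ≤ F - F^2 - 4*d^2 + 4*d^2*F := by
    rw [hk] at hdet
    nlinarith [mul_le_mul_of_nonneg_right (le_of_lt hc) hF.le,
      mul_nonneg hdet hF.le]
  nlinarith

private lemma aux_d2F (a b c : ℂ) :
    4 * normSq (a*a + b*c) ≤ (2*normSq a + normSq b + normSq c)^2 := by
  have h1 : ‖a*a + b*c‖ ≤ ‖a‖^2 + ‖b‖ * ‖c‖ := by
    calc ‖a*a + b*c‖ ≤ ‖a*a‖ + ‖b*c‖ :=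
      norm_add_le _ _
    _ = ‖a‖^2 + ‖b‖ * ‖c‖ := by
      rw [norm_mul, norm_mul]; ring
  have h2 : normSq (a*a+b*c) = ‖a*a+b*c‖^2 := (Complex.sq_norm _).symm
  have ha : normSq a = ‖a‖^2 := (Complex.sq_norm _).symm
  have hb : normSq b = ‖b‖^2 := (Complex.sq_norm _).symm
  have hcc : normSq c = ‖c‖^2 := (Complex.sq_norm _).symm
  rw [h2, ha, hb, hcc]
  nlinarith [sq_nonneg (‖b‖ - ‖c‖),
    norm_nonneg (a*a+b*c),
    norm_nonneg a, norm_nonneg b,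
    norm_nonneg c,
    sq_nonneg (‖a‖^2 + ‖b‖ * ‖c‖),
    mul_nonneg (norm_nonneg b) (norm_nonneg c)]

private lemma aux_trace_re (X : Matrix (Fin 2) (Fin 2) ℂ) :
    (Xᴴ * X).trace.re
      = normSq (X 0 0) + normSq (X 0 1) + normSq (X 1 0) + normSq (X 1 1) := by
  rw [Matrix.trace_fin_two, Matrix.mul_apply, Matrix.mul_apply, Fin.sum_univ_two,
    Fin.sum_univ_two]
  simp only [Matrix.conjTranspose_apply, RCLike.star_def]
  rw [show ((starRingEnd ℂ) (X 0 0) * X 0 0 + (starRingEnd ℂ) (X 1 0) * X 1 0 +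
      ((starRingEnd ℂ) (X 0 1) * X 0 1 + (starRingEnd ℂ) (X 1 1) * X 1 1) : ℂ)
      = ((normSq (X 0 0) + normSq (X 0 1) + normSq (X 1 0) + normSq (X 1 1) : ℝ) : ℂ) by
    push_cast
    rw [← Complex.normSq_eq_conj_mul_self, ← Complex.normSq_eq_conj_mul_self,
      ← Complex.normSq_eq_conj_mul_self, ← Complex.normSq_eq_conj_mul_self]
    push_cast; ring]
  exact Complex.ofReal_re _

private lemma aux_sqrt_le_one {y : ℝ} (hy : 0 ≤ y) : Real.sqrt y ≤ 1 ↔ y ≤ 1 := by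
  constructor
  · intro h1
    nlinarith [Real.sq_sqrt hy, Real.sqrt_nonneg y]
  · intro h1
    rw [show (1:ℝ) = Real.sqrt 1 by rw [Real.sqrt_one]]
    exact Real.sqrt_le_sqrt h1

set_option maxHeartbeats 1000000 in
theorem trace_zero_W2_iff_frobenius (X : Matrix (Fin 2) (Fin 2) ℂ)
    (hX : X.trace = 0) :
    (∀ α β : ℂ, opNorm (α • X + β • Xᴴ) ≤ Real.sqrt (‖α‖ ^ 2 + ‖β‖ ^ 2)) ↔
      Real.sqrt ((Xᴴ * X).trace.re) ≤ 1 := by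
  have he : X 1 1 = -X 0 0 := by
    rw [Matrix.trace_fin_two] at hX
    linear_combination hX
  have hre : (Xᴴ * X).trace.re
      = 2*normSq (X 0 0) + normSq (X 0 1) + normSq (X 1 0) := by
    rw [aux_trace_re, he, normSq_neg]; ring
  have hFr0' : (0:ℝ) ≤ 2*normSq (X 0 0) + normSq (X 0 1) + normSq (X 1 0) := by
    have := normSq_nonneg (X 0 0); have := normSq_nonneg (X 0 1); have := normSq_nonneg (X 1 0)
    linarith
  rw [hre, aux_sqrt_le_one hFr0']
  set Fr := 2*normSq (X 0 0) + normSq (X 0 1) + normSq (X 1 0) with hFrdef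
  set δ := X 0 0 * X 0 0 + X 0 1 * X 1 0 with hδdef
  have hFr0 : 0 ≤ Fr := hFr0' 
  have h4 : 4*normSq δ ≤ Fr^2 := by
    have h := aux_d2F (X 0 0) (X 0 1) (X 1 0)
    rw [← hFrdef, ← hδdef] at h
    exact h
  have hM : ∀ (α β : ℂ) (i j : Fin 2), (α • X + β • Xᴴ) i j
      = α * X i j + β * (starRingEnd ℂ) (X j i) := by
    intro α β i j
    simp [Matrix.add_apply, Matrix.smul_apply, Matrix.conjTranspose_apply, smul_eq_mul,
      RCLike.star_def]
  have hpt_iff : ∀ (α β : ℂ) (cc : ℝ), 0 ≤ cc →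
      (opNorm (α • X + β • Xᴴ) ≤ cc ↔ ∀ x₀ x₁ : ℂ,
        normSq ((α*X 0 0 + β*(starRingEnd ℂ) (X 0 0))*x₀
            + (α*X 0 1 + β*(starRingEnd ℂ) (X 1 0))*x₁)
          + normSq ((α*X 1 0 + β*(starRingEnd ℂ) (X 0 1))*x₀
            - (α*X 0 0 + β*(starRingEnd ℂ) (X 0 0))*x₁)
        ≤ cc^2 * (normSq x₀ + normSq x₁)) := by
    intro α β cc hcc
    rw [aux_bridge _ hcc]
    apply forall_congr'; intro x₀; apply forall_congr'; intro x₁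
    rw [hM α β 0 0, hM α β 0 1, hM α β 1 0, hM α β 1 1, he,
      show (α*X 1 0 + β*(starRingEnd ℂ) (X 0 1))*x₀
          + (α * -X 0 0 + β * (starRingEnd ℂ) (-X 0 0))*x₁
        = (α*X 1 0 + β*(starRingEnd ℂ) (X 0 1))*x₀
          - (α*X 0 0 + β*(starRingEnd ℂ) (X 0 0))*x₁ from by rw [map_neg]; ring]
  have hforward : ∀ α β : ℂ, normSq α + normSq β = 1 →
      opNorm (α • X + β • Xᴴ) ≤ 1 →
      Fr + 4*(α*(starRingEnd ℂ) β*δ).re ≤ 2 ∧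
      0 ≤ 1 - (Fr + 4*(α*(starRingEnd ℂ) β*δ).re)
        + normSq (α*α*δ + β*β*(starRingEnd ℂ) δ + α*β*(Fr:ℂ)) := by
    intro α β hval hle
    have hpt := (hpt_iff α β 1 zero_le_one).mp hle
    have hp' : ∀ x₀ x₁ : ℂ, 0 ≤
        (1 - normSq (α*X 0 0 + β*(starRingEnd ℂ) (X 0 0))
           - normSq (α*X 1 0 + β*(starRingEnd ℂ) (X 0 1)))*normSq x₀
        + (1 - normSq (α*X 0 0 + β*(starRingEnd ℂ) (X 0 0))
           - normSq (α*X 0 1 + β*(starRingEnd ℂ) (X 1 0)))*normSq x₁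
        - 2*((starRingEnd ℂ) x₀ *
            ((starRingEnd ℂ) (α*X 0 0 + β*(starRingEnd ℂ) (X 0 0))
                * (α*X 0 1 + β*(starRingEnd ℂ) (X 1 0))
              - (starRingEnd ℂ) (α*X 1 0 + β*(starRingEnd ℂ) (X 0 1))
                * (α*X 0 0 + β*(starRingEnd ℂ) (X 0 0))) * x₁).re := by
      intro x₀ x₁
      have h1 := hpt x₀ x₁
      have i4 := aux_I4 (α*X 0 0 + β*(starRingEnd ℂ) (X 0 0))
        (α*X 0 1 + β*(starRingEnd ℂ) (X 1 0)) (α*X 1 0 + β*(starRingEnd ℂ) (X 0 1)) x₀ x₁ 1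
      rw [one_pow] at h1
      linarith
    obtain ⟨hA, hB, hdet⟩ := aux_psd_of_pointwise _ _ _ hp'
    have i1 := aux_I1 (X 0 0) (X 0 1) (X 1 0) α β
    have i3 := aux_I3 (α*X 0 0 + β*(starRingEnd ℂ) (X 0 0))
      (α*X 0 1 + β*(starRingEnd ℂ) (X 1 0)) (α*X 1 0 + β*(starRingEnd ℂ) (X 0 1)) 1
    have i5 := aux_I5 (X 0 0) (X 0 1) (X 1 0) α β
    rw [i5] at i3
    rw [← hFrdef, ← hδdef] at i1 i3
    rw [hval, one_mul] at i1
    constructor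
    · linarith
    · nlinarith [hdet, i3, i1]
  constructor
  · intro h
    by_cases hδ0 : δ = 0
    · have hle : opNorm ((1:ℂ) • X + (0:ℂ) • Xᴴ) ≤ 1 := by
        have h1 := h 1 0
        rwa [show ‖(1:ℂ)‖^2 + ‖(0:ℂ)‖^2 = 1 by simp, Real.sqrt_one] at h1
      obtain ⟨h1, h2⟩ := hforward 1 0 (by simp) hle
      have e1 : ((1:ℂ)*(starRingEnd ℂ) (0:ℂ)*δ).re = 0 := by simp
      have e2 : normSq ((1:ℂ)*(1:ℂ)*δ + (0:ℂ)*(0:ℂ)*(starRingEnd ℂ) δ + (1:ℂ)*(0:ℂ)*(Fr:ℂ))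
          = 0 := by rw [hδ0]; simp
      rw [e1, e2] at h2
      linarith
    · have hd0 : 0 < ‖δ‖ := norm_pos_iff.mpr hδ0
      set d := ‖δ‖ with hddef
      have hnsδ : normSq δ = d^2 := by rw [hddef, ← Complex.sq_norm]
      have hFpos : 0 < Fr := by nlinarith
      have h2d : 2*d ≤ Fr := by nlinarith
      set k := d/Fr with hkdef
      have hk0 : 0 ≤ k := by positivity
      have hkF : k*Fr = d := by rw [hkdef]; field_simp
      have hk12 : 2*k ≤ 1 := by
        have e : 2*k = (2*d)/Fr := by rw [hkdef]; ring
        rw [e]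
        exact (div_le_one hFpos).mpr h2d
      have hsr0 : 0 ≤ 1 - 4*k^2 := by nlinarith
      set sr := Real.sqrt (1 - 4*k^2) with hsrdef
      have hsr2 : sr^2 = 1 - 4*k^2 := Real.sq_sqrt hsr0
      have hsrnn : 0 ≤ sr := Real.sqrt_nonneg _
      have hsr1 : sr ≤ 1 := by nlinarith
      set u := Real.sqrt ((1+sr)/2) with hudef
      set v := Real.sqrt ((1-sr)/2) with hvdef
      have hu2 : u^2 = (1+sr)/2 := Real.sq_sqrt (by linarith)
      have hv2 : v^2 = (1-sr)/2 := Real.sq_sqrt (by linarith)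
      have huv : u*v = k := by
        rw [hudef, hvdef, ← Real.sqrt_mul (by linarith),
          show (1+sr)/2 * ((1-sr)/2) = k^2 by linear_combination (-(1:ℝ)/4) * hsr2]
        exact Real.sqrt_sq hk0
      have hs1 : u^2 + v^2 = 1 := by rw [hu2, hv2]; ring
      obtain ⟨ω, hω2⟩ := IsAlgClosed.exists_pow_nat_eq (δ / (d:ℂ)) zero_lt_two
      have hdC : ((d:ℝ):ℂ) ≠ 0 := Complex.ofReal_ne_zero.mpr hd0.ne'
      have hω2' : ω^2 * (d:ℂ) = δ := by rw [hω2]; field_simp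
      have hnω : normSq ω = 1 := by
        have h1 : normSq ω^2 * d^2 = 1 * d^2 := by
          have h2 := congrArg normSq hω2'
          rw [normSq_mul, map_pow, normSq_ofReal, hnsδ] at h2
          linear_combination h2
        have h2 : normSq ω^2 = 1 := mul_right_cancel₀ (pow_ne_zero 2 hd0.ne') h1
        have h3 : (normSq ω - 1)*(normSq ω + 1) = 0 := by linear_combination h2
        rcases mul_eq_zero.mp h3 with h4 | h4
        · linarith
        · nlinarith [normSq_nonneg ω]
      have hcω : (starRingEnd ℂ) ω * ω = 1 := by
        rw [← Complex.normSq_eq_conj_mul_self, hnω, Complex.ofReal_one]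
      have f1 : ((starRingEnd ℂ) ω)^2 * δ = (d:ℂ) := by
        linear_combination (-((starRingEnd ℂ) ω)^2) * hω2'
          + ((d:ℂ)*((starRingEnd ℂ) ω*ω+1)) * hcω
      have f2 : ω^2 * (starRingEnd ℂ) δ = (d:ℂ) := by
        have h1 := congrArg (starRingEnd ℂ) f1
        simpa [map_pow, Complex.conj_conj, Complex.conj_ofReal] using h1
      have hle : opNorm (((starRingEnd ℂ) ω * (u:ℂ)) • X + (ω * (v:ℂ)) • Xᴴ) ≤ 1 := by
        have h1 := h ((starRingEnd ℂ) ω * (u:ℂ)) (ω * (v:ℂ))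
        rwa [show ‖(starRingEnd ℂ) ω * (u:ℂ)‖^2 + ‖ω * (v:ℂ)‖^2 = 1 by
          rw [Complex.sq_norm, Complex.sq_norm,
            normSq_mul, normSq_mul, normSq_conj, hnω, normSq_ofReal, normSq_ofReal]
          nlinarith [hs1], Real.sqrt_one] at h1
      have hval : normSq ((starRingEnd ℂ) ω * (u:ℂ)) + normSq (ω * (v:ℂ)) = 1 := by
        rw [normSq_mul, normSq_mul, normSq_conj, hnω, normSq_ofReal, normSq_ofReal]
        nlinarith [hs1]
      obtain ⟨h1, h2⟩ := hforward _ _ hval hle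
      have hw : ((starRingEnd ℂ) ω * (u:ℂ)) * (starRingEnd ℂ) (ω * (v:ℂ)) * δ
          = ((u*v*d:ℝ):ℂ) := by
        rw [_root_.map_mul, Complex.conj_ofReal]
        push_cast
        linear_combination ((u:ℂ)*(v:ℂ)) * f1
      have hPQ : ((starRingEnd ℂ) ω * (u:ℂ))*((starRingEnd ℂ) ω * (u:ℂ))*δ
          + (ω * (v:ℂ))*(ω * (v:ℂ))*(starRingEnd ℂ) δ
          + ((starRingEnd ℂ) ω * (u:ℂ))*(ω * (v:ℂ))*(Fr:ℂ)
          = ((u^2*d + v^2*d + u*v*Fr : ℝ):ℂ) := by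
        push_cast
        linear_combination ((u:ℂ)^2) * f1 + ((v:ℂ)^2) * f2 + ((u:ℂ)*(v:ℂ)*(Fr:ℂ)) * hcω
      rw [hw, Complex.ofReal_re] at h1 h2
      rw [hPQ, normSq_ofReal] at h2
      have hd' : u^2*d + v^2*d + u*v*Fr = d + (u*v)*Fr := by linear_combination d * hs1
      rw [hd'] at h2
      have hk : (u*v)*Fr = d := by rw [huv]; exact hkF
      refine aux_endgame Fr d (u*v) hFpos hk (by linarith) ?_
      have h2' : (d + (u*v)*Fr)*(d + (u*v)*Fr) = (d + (u*v)*Fr)^2 := by ring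
      rw [h2'] at h2
      linarith
  · intro hFle α β
    have hc0 : (0:ℝ) ≤ Real.sqrt (‖α‖^2 + ‖β‖^2) := Real.sqrt_nonneg _
    rw [hpt_iff α β _ hc0]
    have hc2 : (Real.sqrt (‖α‖^2 + ‖β‖^2))^2 = normSq α + normSq β := by
      rw [Real.sq_sqrt (by positivity),
        Complex.sq_norm, Complex.sq_norm]
    intro x₀ x₁
    rw [hc2]
    have hR := aux_R1 (normSq α) (normSq β) (normSq δ) Fr
      ((α*(starRingEnd ℂ) β*δ).re) ((α*(starRingEnd ℂ) β*δ).im)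
      (normSq_nonneg α) (normSq_nonneg β) (normSq_nonneg δ) hFr0 hFle h4 (aux_rm α β δ)
    have i1 := aux_I1 (X 0 0) (X 0 1) (X 1 0) α β
    have i3 := aux_I3 (α*X 0 0 + β*(starRingEnd ℂ) (X 0 0))
      (α*X 0 1 + β*(starRingEnd ℂ) (X 1 0)) (α*X 1 0 + β*(starRingEnd ℂ) (X 0 1))
      (normSq α + normSq β)
    have i5 := aux_I5 (X 0 0) (X 0 1) (X 1 0) α β
    rw [i5] at i3
    rw [← hFrdef, ← hδdef] at i1 i3
    have i2 := aux_I2 α β δ Fr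
    rw [i1] at i3
    have i4 := aux_I4 (α*X 0 0 + β*(starRingEnd ℂ) (X 0 0))
      (α*X 0 1 + β*(starRingEnd ℂ) (X 1 0)) (α*X 1 0 + β*(starRingEnd ℂ) (X 0 1)) x₀ x₁
      (normSq α + normSq β)
    have hpsd := aux_psd_pointwise
      (normSq α + normSq β - normSq (α*X 0 0 + β*(starRingEnd ℂ) (X 0 0))
        - normSq (α*X 1 0 + β*(starRingEnd ℂ) (X 0 1)))
      (normSq α + normSq β - normSq (α*X 0 0 + β*(starRingEnd ℂ) (X 0 0))
        - normSq (α*X 0 1 + β*(starRingEnd ℂ) (X 1 0)))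
      ((starRingEnd ℂ) (α*X 0 0 + β*(starRingEnd ℂ) (X 0 0))
          * (α*X 0 1 + β*(starRingEnd ℂ) (X 1 0))
        - (starRingEnd ℂ) (α*X 1 0 + β*(starRingEnd ℂ) (X 0 1))
          * (α*X 0 0 + β*(starRingEnd ℂ) (X 0 0))) x₀ x₁
      (by linarith [hR.1, i1]) (by nlinarith [i3, i2, hR.2])
    linarith [i4, hpsd]
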